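/- Let P be a real-valued C^k function on [a,b] with |P^{(k)}(x)| ≥ M > 0 for all x in [a,b], where k ≥ 2, and let ψ be a complex-valued C^1 function on [a,b]. Then there is a constant c_k depending only on k such that |∫_a^b e^{iP(x)} ψ(x) dx| ≤ c_k M^{-1/k} (|ψ(b)| + ∫_a^b |ψ'(x)| dx). -/

import Mathlib

open Set MeasureTheory intervalIntegral

namespace VdCAux


lemma norm_exp_I_mul (r : ℝ) : ‖Complex.exp (Complex.I * (r : ℂ))‖ = 1 := by
  rw [Complex.norm_exp]
  simp

lemma contOn_exp {f : ℝ → ℝ} {s : Set ℝ} (hf : ContinuousOn f s) :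
    ContinuousOn (fun x => Complex.exp (Complex.I * (f x : ℂ))) s := by
  have h1 : ContinuousOn (fun x => Complex.I * (f x : ℂ)) s :=
    continuousOn_const.mul (Complex.continuous_ofReal.comp_continuousOn hf)
  exact Complex.continuous_exp.comp_continuousOn h1

lemma hasDeriv_ofReal {f : ℝ → ℝ} {f' : ℝ} {s : Set ℝ} {x : ℝ}
    (hf : HasDerivWithinAt f f' s x) :
    HasDerivWithinAt (fun y => ((f y : ℂ))) ((f' : ℂ)) s x := by
  exact Complex.ofRealCLM.hasFDerivAt.comp_hasDerivWithinAt x hf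

lemma hasDeriv_exp {f : ℝ → ℝ} {f' : ℝ} {s : Set ℝ} {x : ℝ}
    (hf : HasDerivWithinAt f f' s x) :
    HasDerivWithinAt (fun y => Complex.exp (Complex.I * (f y : ℂ)))
      (Complex.exp (Complex.I * (f x : ℂ)) * (Complex.I * (f' : ℂ))) s x :=
  ((hasDeriv_ofReal hf).const_mul Complex.I).cexp

lemma ftc {E : Type*} [NormedAddCommGroup E] [NormedSpace ℝ E] [CompleteSpace E]
    {F F' : ℝ → E} {a b : ℝ} (hab : a ≤ b) (hF : ContinuousOn F (Icc a b))
    (hd : ∀ x ∈ Ioo a b, HasDerivWithinAt F (F' x) (Icc a b) x)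
    (hi : IntervalIntegrable F' volume a b) :
    ∫ x in a..b, F' x = F b - F a := by
  refine integral_eq_sub_of_hasDeriv_right_of_le hab hF (fun x hx => ?_) hi
  exact ((hd x hx).hasDerivAt (Icc_mem_nhds hx.1 hx.2)).hasDerivWithinAt




lemma sign_dichotomy {a b M : ℝ} {h : ℝ → ℝ} (hab : a ≤ b) (hM : 0 < M)
    (hcont : ContinuousOn h (Icc a b)) (hbig : ∀ x ∈ Icc a b, M ≤ |h x|) :
    (∀ x ∈ Icc a b, M ≤ h x) ∨ (∀ x ∈ Icc a b, h x ≤ -M) := by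
  have ha : a ∈ Icc a b := ⟨le_rfl, hab⟩
  have key : ∀ x ∈ Icc a b, ∀ y ∈ Icc a b, M ≤ h x → h y ≤ -M → False := by
    intro x hx y hy hx1 hy1
    have hsub : uIcc x y ⊆ Icc a b := uIcc_subset_Icc hx hy
    have h0 : (0:ℝ) ∈ uIcc (h x) (h y) := by
      rw [Set.mem_uIcc]; right; constructor <;> linarith
    obtain ⟨z, hz, hz0⟩ := intermediate_value_uIcc (hcont.mono hsub) h0
    have := hbig z (hsub hz)
    rw [hz0] at this; simp at this; linarith
  rcases le_abs.1 (hbig a ha) with hA | hA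
  · left
    intro x hx
    rcases le_abs.1 (hbig x hx) with h1 | h1
    · exact h1
    · exact absurd (key a ha x hx hA (by linarith)) (fun h => h)
  · right
    intro x hx
    rcases le_abs.1 (hbig x hx) with h1 | h1
    · exact absurd (key x hx a ha h1 (by linarith)) (fun h => h)
    · linarith




lemma grow {a b M : ℝ} {g h : ℝ → ℝ} (hab : a ≤ b)
    (hd : ∀ x ∈ Icc a b, HasDerivWithinAt g (h x) (Icc a b) x)
    (hM : ∀ x ∈ Icc a b, M ≤ h x) :
    ∀ x ∈ Icc a b, ∀ y ∈ Icc a b, x ≤ y → M * (y - x) ≤ g y - g x := by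
  apply Convex.mul_sub_le_image_sub_of_le_deriv (convex_Icc a b)
  · exact fun x hx => (hd x hx).continuousWithinAt
  · intro x hx
    rw [interior_Icc] at hx
    exact (((hd x (Ioo_subset_Icc_self hx)).hasDerivAt
      (Icc_mem_nhds hx.1 hx.2)).differentiableAt).differentiableWithinAt
  · intro x hx
    rw [interior_Icc] at hx
    rw [((hd x (Ioo_subset_Icc_self hx)).hasDerivAt (Icc_mem_nhds hx.1 hx.2)).deriv]
    exact hM x (Ioo_subset_Icc_self hx)

lemma exists_center {a b M : ℝ} {g h : ℝ → ℝ} (hab : a ≤ b)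
    (hd : ∀ x ∈ Icc a b, HasDerivWithinAt g (h x) (Icc a b) x)
    (hpos : ∀ x ∈ Icc a b, M ≤ h x) :
    ∃ t0 ∈ Icc a b, ∀ x ∈ Icc a b, M * |x - t0| ≤ |g x| := by
  have key := grow hab hd hpos
  rcases le_or_gt 0 (g a) with hga | hga
  · refine ⟨a, ⟨le_rfl, hab⟩, fun x hx => ?_⟩
    rw [abs_of_nonneg (by linarith [hx.1] : (0:ℝ) ≤ x - a)]
    have := key a ⟨le_rfl, hab⟩ x hx hx.1
    calc M * (x - a) ≤ g x - g a := this
      _ ≤ g x := by linarith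
      _ ≤ |g x| := le_abs_self _
  rcases le_or_gt (g b) 0 with hgb | hgb
  · refine ⟨b, ⟨hab, le_rfl⟩, fun x hx => ?_⟩
    rw [abs_of_nonpos (by linarith [hx.2] : x - b ≤ 0)]
    have := key x hx b ⟨hab, le_rfl⟩ hx.2
    calc M * -(x - b) = M * (b - x) := by ring_nf
      _ ≤ g b - g x := this
      _ ≤ -g x := by linarith
      _ ≤ |g x| := neg_le_abs _
  · have hcont : ContinuousOn g (Icc a b) := fun x hx => (hd x hx).continuousWithinAt
    obtain ⟨t0, ht0mem, ht0⟩ := intermediate_value_Icc hab hcont ⟨hga.le, hgb.le⟩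
    refine ⟨t0, ht0mem, fun x hx => ?_⟩
    rcases le_total x t0 with hle | hle
    · rw [abs_of_nonpos (by linarith : x - t0 ≤ 0)]
      have := key x hx t0 ht0mem hle
      calc M * -(x - t0) = M * (t0 - x) := by ring_nf
        _ ≤ g t0 - g x := this
        _ ≤ -g x := by rw [ht0]; linarith
        _ ≤ |g x| := neg_le_abs _
    · rw [abs_of_nonneg (by linarith : (0:ℝ) ≤ x - t0)]
      have := key t0 ht0mem x hx hle
      calc M * (x - t0) ≤ g x - g t0 := this
        _ ≤ g x := by rw [ht0]; linarith
        _ ≤ |g x| := le_abs_self _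






lemma split {a b t0 δ M B : ℝ} {p0 g : ℝ → ℝ} (hab : a ≤ b) (hδ : 0 < δ) (hM : 0 ≤ M)
    (hB : 0 ≤ B) (hcont : ContinuousOn p0 (Icc a b)) (ht0 : t0 ∈ Icc a b)
    (hg : ∀ x ∈ Icc a b, M * |x - t0| ≤ |g x|)
    (hgood : ∀ c d : ℝ, a ≤ c → c ≤ d → d ≤ b → (∀ x ∈ Icc c d, M * δ ≤ |g x|) →
      ‖∫ x in c..d, Complex.exp (Complex.I * (p0 x : ℂ))‖ ≤ B) :
    ‖∫ x in a..b, Complex.exp (Complex.I * (p0 x : ℂ))‖ ≤ 2 * B + 2 * δ := by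
  set c := max a (t0 - δ) with hc
  set d := min b (t0 + δ) with hd
  have hac : a ≤ c := le_max_left _ _
  have hct : c ≤ t0 := max_le ht0.1 (by linarith)
  have htd : t0 ≤ d := le_min ht0.2 (by linarith)
  have hcd : c ≤ d := hct.trans htd
  have hdb : d ≤ b := min_le_left _ _
  have hcb : c ≤ b := hcd.trans hdb
  have had : a ≤ d := hac.trans hcd
  have hecont : ContinuousOn (fun x => Complex.exp (Complex.I * (p0 x : ℂ))) (Icc a b) :=
    contOn_exp hcont
  have hint : ∀ u v : ℝ, a ≤ u → u ≤ v → v ≤ b →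
      IntervalIntegrable (fun x => Complex.exp (Complex.I * (p0 x : ℂ))) volume u v := by
    intro u v hu huv hv
    apply ContinuousOn.intervalIntegrable
    rw [uIcc_of_le huv]
    exact hecont.mono (Icc_subset_Icc hu hv)
  have hsplit : (∫ x in a..b, Complex.exp (Complex.I * (p0 x : ℂ)))
      = (∫ x in a..c, Complex.exp (Complex.I * (p0 x : ℂ)))
        + ((∫ x in c..d, Complex.exp (Complex.I * (p0 x : ℂ)))
        + (∫ x in d..b, Complex.exp (Complex.I * (p0 x : ℂ)))) := by
    rw [integral_add_adjacent_intervals (hint c d hac hcd hdb) (hint d b had hdb le_rfl)]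
    rw [integral_add_adjacent_intervals (hint a c le_rfl hac hcb) (hint c b hac hcb le_rfl)]
  have hleft : ‖∫ x in a..c, Complex.exp (Complex.I * (p0 x : ℂ))‖ ≤ B := by
    rcases le_or_gt (t0 - δ) a with h | h
    · have : c = a := max_eq_left (by linarith)
      rw [this, integral_same, norm_zero]; exact hB
    · have hceq : c = t0 - δ := max_eq_right h.le
      refine hgood a c le_rfl hac hcb fun x hx => ?_
      have hxb : x ∈ Icc a b := ⟨hx.1, hx.2.trans hcb⟩
      have h1 := hg x hxb
      have h2 : δ ≤ |x - t0| := by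
        rw [abs_sub_comm, abs_of_nonneg (by rw [hceq] at hx; linarith [hx.2])]
        rw [hceq] at hx; linarith [hx.2]
      calc M * δ ≤ M * |x - t0| := mul_le_mul_of_nonneg_left h2 hM
        _ ≤ |g x| := h1
  have hright : ‖∫ x in d..b, Complex.exp (Complex.I * (p0 x : ℂ))‖ ≤ B := by
    rcases le_or_gt b (t0 + δ) with h | h
    · have : d = b := min_eq_left (by linarith)
      rw [this, integral_same, norm_zero]; exact hB
    · have hdeq : d = t0 + δ := min_eq_right h.le
      refine hgood d b had hdb le_rfl fun x hx => ?_
      have hxb : x ∈ Icc a b := ⟨had.trans hx.1, hx.2⟩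
      have h1 := hg x hxb
      have h2 : δ ≤ |x - t0| := by
        rw [abs_of_nonneg (by rw [hdeq] at hx; linarith [hx.1])]
        rw [hdeq] at hx; linarith [hx.1]
      calc M * δ ≤ M * |x - t0| := mul_le_mul_of_nonneg_left h2 hM
        _ ≤ |g x| := h1
  have hmid : ‖∫ x in c..d, Complex.exp (Complex.I * (p0 x : ℂ))‖ ≤ 2 * δ := by
    have := intervalIntegral.norm_integral_le_of_norm_le_const
      (C := 1) (f := fun x => Complex.exp (Complex.I * (p0 x : ℂ))) (a := c) (b := d)
      (fun x _ => by rw [norm_exp_I_mul])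
    calc ‖∫ x in c..d, Complex.exp (Complex.I * (p0 x : ℂ))‖ ≤ 1 * |d - c| := this
      _ = d - c := by rw [one_mul, abs_of_nonneg (by linarith)]
      _ ≤ 2 * δ := by
          have h1 : t0 - δ ≤ c := le_max_right _ _
          have h2 : d ≤ t0 + δ := min_le_right _ _
          linarith
  calc ‖∫ x in a..b, Complex.exp (Complex.I * (p0 x : ℂ))‖
      ≤ ‖∫ x in a..c, Complex.exp (Complex.I * (p0 x : ℂ))‖
        + (‖∫ x in c..d, Complex.exp (Complex.I * (p0 x : ℂ))‖
        + ‖∫ x in d..b, Complex.exp (Complex.I * (p0 x : ℂ))‖) := by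
        rw [hsplit]; exact (norm_add_le _ _).trans (by gcongr; exact norm_add_le _ _)
    _ ≤ B + (2 * δ + B) := by gcongr
    _ = 2 * B + 2 * δ := by ring









lemma k1_bound {a b L : ℝ} {p0 p1 p2 : ℝ → ℝ} (hab : a ≤ b) (hL : 0 < L)
    (hd0 : ∀ x ∈ Icc a b, HasDerivWithinAt p0 (p1 x) (Icc a b) x)
    (hd1 : ∀ x ∈ Icc a b, HasDerivWithinAt p1 (p2 x) (Icc a b) x)
    (hc2 : ContinuousOn p2 (Icc a b))
    (hp1 : ∀ x ∈ Icc a b, L ≤ |p1 x|)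
    (hsign : (∀ x ∈ Icc a b, 0 ≤ p2 x) ∨ (∀ x ∈ Icc a b, p2 x ≤ 0)) :
    ‖∫ x in a..b, Complex.exp (Complex.I * (p0 x : ℂ))‖ ≤ 4 / L := by
  -- basic nonvanishing facts
  have hne : ∀ x ∈ Icc a b, p1 x ≠ 0 := fun x hx h0 => by
    have := hp1 x hx; rw [h0, abs_zero] at this; linarith
  have hIne : ∀ x ∈ Icc a b, (Complex.I * (p1 x : ℂ)) ≠ 0 := fun x hx =>
    mul_ne_zero Complex.I_ne_zero (by exact_mod_cast hne x hx)
  set v : ℝ → ℂ := fun x => Complex.exp (Complex.I * (p0 x : ℂ)) with hv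
  set u : ℝ → ℂ := fun x => (Complex.I * (p1 x : ℂ))⁻¹ with hu
  set du : ℝ → ℂ := fun x => -(((Complex.I * (p1 x : ℂ)) ^ 2)⁻¹) * (Complex.I * (p2 x : ℂ)) with hdu
  -- continuity
  have hc0 : ContinuousOn p0 (Icc a b) := fun x hx => (hd0 x hx).continuousWithinAt
  have hc1 : ContinuousOn p1 (Icc a b) := fun x hx => (hd1 x hx).continuousWithinAt
  have hcv : ContinuousOn v (Icc a b) := contOn_exp hc0
  have hcIp1 : ContinuousOn (fun x => Complex.I * (p1 x : ℂ)) (Icc a b) :=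
    continuousOn_const.mul (Complex.continuous_ofReal.comp_continuousOn hc1)
  have hcu : ContinuousOn u (Icc a b) := hcIp1.inv₀ hIne
  have hcdu : ContinuousOn du (Icc a b) := by
    refine ContinuousOn.mul (ContinuousOn.neg (ContinuousOn.inv₀ (hcIp1.pow 2)
      (fun x hx => pow_ne_zero 2 (hIne x hx)))) ?_
    exact continuousOn_const.mul (Complex.continuous_ofReal.comp_continuousOn hc2)
  -- derivatives
  have hder_u : ∀ x ∈ Icc a b, HasDerivWithinAt u (du x) (Icc a b) x := by
    intro x hx
    exact (hasDerivAt_inv (hIne x hx)).comp_hasDerivWithinAt x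
      ((hasDeriv_ofReal (hd1 x hx)).const_mul Complex.I)
  have hder_v : ∀ x ∈ Icc a b,
      HasDerivWithinAt v (v x * (Complex.I * (p1 x : ℂ))) (Icc a b) x := fun x hx =>
    hasDeriv_exp (hd0 x hx)
  -- integrability
  have hi1 : IntervalIntegrable (fun x => du x * v x) volume a b := by
    apply ContinuousOn.intervalIntegrable; rw [uIcc_of_le hab]; exact hcdu.mul hcv
  have hi2 : IntervalIntegrable (fun x => u x * (v x * (Complex.I * (p1 x : ℂ)))) volume a b := by
    apply ContinuousOn.intervalIntegrable; rw [uIcc_of_le hab]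
    exact hcu.mul (hcv.mul hcIp1)
  -- FTC for u*v
  have hftc : (∫ x in a..b, (du x * v x + u x * (v x * (Complex.I * (p1 x : ℂ)))))
      = u b * v b - u a * v a := by
    refine ftc hab (hcu.mul hcv) (fun x hx => ?_) (hi1.add hi2)
    exact (hder_u x (Ioo_subset_Icc_self hx)).mul (hder_v x (Ioo_subset_Icc_self hx))
  have hsplit : (∫ x in a..b, du x * v x)
      + (∫ x in a..b, u x * (v x * (Complex.I * (p1 x : ℂ))))
      = u b * v b - u a * v a := by
    rw [← integral_add hi1 hi2]; exact hftc
  have huv : ∀ x ∈ Icc a b, u x * (v x * (Complex.I * (p1 x : ℂ))) = v x := by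
    intro x hx
    rw [hu]
    rw [mul_comm (v x) (Complex.I * (p1 x : ℂ)), ← mul_assoc,
      inv_mul_cancel₀ (hIne x hx), one_mul]
  have hmain : (∫ x in a..b, v x)
      = u b * v b - u a * v a - ∫ x in a..b, du x * v x := by
    have : (∫ x in a..b, u x * (v x * (Complex.I * (p1 x : ℂ)))) = ∫ x in a..b, v x := by
      apply integral_congr
      rw [uIcc_of_le hab]
      exact fun x hx => huv x hx
    rw [← this]; linear_combination hsplit
  -- norms of boundary terms
  have hvnorm : ∀ x : ℝ, ‖v x‖ = 1 := fun x => norm_exp_I_mul _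
  have hunorm : ∀ x ∈ Icc a b, ‖u x‖ ≤ 1 / L := by
    intro x hx
    rw [hu]
    simp only [norm_inv, norm_mul, Complex.norm_I, one_mul, Complex.norm_real,
      Real.norm_eq_abs]
    rw [one_div]
    exact inv_anti₀ hL (hp1 x hx)
  have hbd : ∀ x ∈ Icc a b, ‖u x * v x‖ ≤ 1 / L := by
    intro x hx
    rw [norm_mul, hvnorm, mul_one]
    exact hunorm x hx
  -- the real derivative of 1/p1
  set φ : ℝ → ℝ := fun x => (p1 x)⁻¹ with hφ
  set dφ : ℝ → ℝ := fun x => -p2 x / p1 x ^ 2 with hdφ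
  have hφcont : ContinuousOn φ (Icc a b) := hc1.inv₀ hne
  have hdφcont : ContinuousOn dφ (Icc a b) :=
    (hc2.neg).div (hc1.pow 2) (fun x hx => pow_ne_zero 2 (hne x hx))
  have hiφ : IntervalIntegrable dφ volume a b := by
    apply ContinuousOn.intervalIntegrable; rw [uIcc_of_le hab]; exact hdφcont
  have hftcφ : (∫ x in a..b, dφ x) = φ b - φ a := by
    refine ftc hab hφcont (fun x hx => ?_) hiφ
    exact (hd1 x (Ioo_subset_Icc_self hx)).inv (hne x (Ioo_subset_Icc_self hx))
  have hφbound : ∀ x ∈ Icc a b, |φ x| ≤ 1 / L := by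
    intro x hx
    rw [hφ]
    simp only [abs_inv]
    rw [one_div]
    exact inv_anti₀ hL (hp1 x hx)
  -- pointwise norm of du * v
  have hdunorm : ∀ x ∈ Icc a b, ‖du x * v x‖ = |p2 x| / p1 x ^ 2 := by
    intro x hx
    rw [norm_mul, hvnorm, mul_one, hdu]
    simp only [norm_mul, norm_neg, norm_inv, norm_pow, Complex.norm_I, one_mul,
      Complex.norm_real, Real.norm_eq_abs]
    rw [sq_abs, div_eq_inv_mul]
  -- bound the integral of |p2|/p1^2
  have hr_int : (∫ x in a..b, ‖du x * v x‖) ≤ 2 / L := by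
    have h2L : 2 / L = 1 / L + 1 / L := by ring
    obtain ⟨ha1, ha2⟩ := abs_le.1 (hφbound a ⟨le_rfl, hab⟩)
    obtain ⟨hb1, hb2⟩ := abs_le.1 (hφbound b ⟨hab, le_rfl⟩)
    rcases hsign with hs | hs
    · have hEq : EqOn (fun x => ‖du x * v x‖) (fun x => -dφ x) (uIcc a b) := by
        rw [uIcc_of_le hab]
        intro x hx
        simp only
        rw [hdunorm x hx, hdφ, abs_of_nonneg (hs x hx)]
        ring
      rw [integral_congr hEq, intervalIntegral.integral_neg, hftcφ]
      rw [h2L]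
      linarith
    · have hEq : EqOn (fun x => ‖du x * v x‖) dφ (uIcc a b) := by
        rw [uIcc_of_le hab]
        intro x hx
        simp only
        rw [hdunorm x hx, hdφ, abs_of_nonpos (hs x hx)]
      rw [integral_congr hEq, hftcφ, h2L]
      linarith
  have hend : ‖∫ x in a..b, du x * v x‖ ≤ 2 / L :=
    le_trans (norm_integral_le_integral_norm hab) hr_int
  calc ‖∫ x in a..b, v x‖
      = ‖u b * v b - u a * v a - ∫ x in a..b, du x * v x‖ := by rw [hmain]
    _ ≤ ‖u b * v b - u a * v a‖ + ‖∫ x in a..b, du x * v x‖ := norm_sub_le _ _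
    _ ≤ (‖u b * v b‖ + ‖u a * v a‖) + ‖∫ x in a..b, du x * v x‖ := by
        gcongr; exact norm_sub_le _ _
    _ ≤ (1 / L + 1 / L) + 2 / L := by
        gcongr
        · exact hbd b ⟨hab, le_rfl⟩
        · exact hbd a ⟨le_rfl, hab⟩
    _ = 4 / L := by ring




lemma rpow_helper {k : ℕ} (hk : 1 ≤ k) {M : ℝ} (hM : 0 < M) :
    (M * M ^ (-(1:ℝ)/((k:ℝ)+1))) ^ (-(1:ℝ)/(k:ℝ)) = M ^ (-(1:ℝ)/((k:ℝ)+1)) := by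
  have hκ : (0:ℝ) < (k:ℝ) := by exact_mod_cast hk
  have h1 : M * M ^ (-(1:ℝ)/((k:ℝ)+1)) = M ^ (1 + -(1:ℝ)/((k:ℝ)+1)) := by
    rw [Real.rpow_add hM, Real.rpow_one]
  rw [h1, ← Real.rpow_mul hM.le]
  congr 1
  field_simp
  ring

lemma norm_integral_exp_neg (f : ℝ → ℝ) (a b : ℝ) :
    ‖∫ x in a..b, Complex.exp (Complex.I * ((-f x : ℝ) : ℂ))‖
      = ‖∫ x in a..b, Complex.exp (Complex.I * ((f x : ℝ) : ℂ))‖ := by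
  have hpt : ∀ x : ℝ, Complex.exp (Complex.I * ((-f x : ℝ) : ℂ))
      = (starRingEnd ℂ) (Complex.exp (Complex.I * ((f x : ℝ) : ℂ))) := by
    intro x
    rw [← Complex.exp_conj]
    congr 1
    simp [Complex.conj_I]
  simp_rw [hpt]
  have hconj : (∫ x in a..b, (starRingEnd ℂ) (Complex.exp (Complex.I * ((f x : ℝ) : ℂ))))
      = (starRingEnd ℂ) (∫ x in a..b, Complex.exp (Complex.I * ((f x : ℝ) : ℂ))) := by
    simp only [intervalIntegral]
    rw [map_sub, ← integral_conj, ← integral_conj]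
  rw [hconj, RCLike.norm_conj]


def CoreBound (k : ℕ) (C : ℝ) : Prop :=
  ∀ (a b M : ℝ) (p : ℕ → ℝ → ℝ), a ≤ b → 0 < M →
    ContinuousOn (p k) (Icc a b) →
    (∀ j, j < k → ∀ x ∈ Icc a b, HasDerivWithinAt (p j) (p (j+1) x) (Icc a b) x) →
    (∀ x ∈ Icc a b, M ≤ |p k x|) →
    ‖∫ x in a..b, Complex.exp (Complex.I * (p 0 x : ℂ))‖ ≤ C * M ^ (-(1:ℝ)/(k:ℝ))

lemma core_base : CoreBound 2 10 := by
  intro a b M p hab hM hcont hd hbig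
  set δ := M ^ (-(1:ℝ)/(2:ℝ)) with hδdef
  have hδ : 0 < δ := Real.rpow_pos_of_pos hM _
  have hMδ : 0 < M * δ := mul_pos hM hδ
  have hdi := sign_dichotomy hab hM hcont hbig
  have hcen : ∃ t0 ∈ Icc a b, ∀ x ∈ Icc a b, M * |x - t0| ≤ |p 1 x| := by
    rcases hdi with hs | hs
    · exact exists_center hab (hd 1 (by norm_num)) hs
    · obtain ⟨t0, ht0, hc⟩ := exists_center (M := M) (g := fun x => -p 1 x)
        (h := fun x => -p 2 x) hab
        (fun x hx => (hd 1 (by norm_num) x hx).neg)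
        (fun x hx => by have := hs x hx; linarith)
      exact ⟨t0, ht0, fun x hx => by simpa [abs_neg] using hc x hx⟩
  obtain ⟨t0, ht0, hcen⟩ := hcen
  have hp0cont : ContinuousOn (p 0) (Icc a b) :=
    fun x hx => (hd 0 (by norm_num) x hx).continuousWithinAt
  have hgood : ∀ c d : ℝ, a ≤ c → c ≤ d → d ≤ b → (∀ x ∈ Icc c d, M * δ ≤ |p 1 x|) →
      ‖∫ x in c..d, Complex.exp (Complex.I * (p 0 x : ℂ))‖ ≤ 4 / (M * δ) := by
    intro c d hac hcd hdb hb'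
    have hsub : Icc c d ⊆ Icc a b := Icc_subset_Icc hac hdb
    refine k1_bound hcd hMδ
      (fun x hx => ((hd 0 (by norm_num) x (hsub hx)).mono hsub))
      (fun x hx => ((hd 1 (by norm_num) x (hsub hx)).mono hsub))
      (hcont.mono hsub) hb' ?_
    rcases hdi with hs | hs
    · exact Or.inl fun x hx => le_of_lt (lt_of_lt_of_le hM (hs x (hsub hx)))
    · exact Or.inr fun x hx => le_trans (hs x (hsub hx)) (by linarith)
  have hkey := split hab hδ hM.le (by positivity) hp0cont ht0 hcen hgood
  have hδδ : δ * (M * δ) = 1 := by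
    rw [hδdef]
    calc M ^ (-(1:ℝ)/2) * (M * M ^ (-(1:ℝ)/2))
        = M ^ (-(1:ℝ)/2) * (M ^ (1:ℝ) * M ^ (-(1:ℝ)/2)) := by rw [Real.rpow_one]
      _ = M ^ (-(1:ℝ)/2 + ((1:ℝ) + -(1:ℝ)/2)) := by
          rw [← Real.rpow_add hM, ← Real.rpow_add hM]
      _ = M ^ (0:ℝ) := by norm_num
      _ = 1 := Real.rpow_zero M
  have h4 : 4 / (M * δ) = 4 * δ := by
    rw [div_eq_iff hMδ.ne', mul_assoc, hδδ, mul_one]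
  have hcast : ((2:ℕ):ℝ) = (2:ℝ) := by norm_num
  calc ‖∫ x in a..b, Complex.exp (Complex.I * (p 0 x : ℂ))‖
      ≤ 2 * (4 / (M * δ)) + 2 * δ := hkey
    _ = 10 * δ := by rw [h4]; ring
    _ = 10 * M ^ (-(1:ℝ)/((2:ℕ):ℝ)) := by rw [hcast, hδdef]

lemma core_step {k : ℕ} (hk : 1 ≤ k) {C : ℝ} (hC : 0 < C) (hcore : CoreBound k C) :
    CoreBound (k+1) (2*C+2) := by
  have main : ∀ (a b M : ℝ) (p : ℕ → ℝ → ℝ), a ≤ b → 0 < M →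
      ContinuousOn (p (k+1)) (Icc a b) →
      (∀ j, j < k+1 → ∀ x ∈ Icc a b, HasDerivWithinAt (p j) (p (j+1) x) (Icc a b) x) →
      (∀ x ∈ Icc a b, M ≤ p (k+1) x) →
      ‖∫ x in a..b, Complex.exp (Complex.I * (p 0 x : ℂ))‖
        ≤ (2*C+2) * M ^ (-(1:ℝ)/((k+1:ℕ):ℝ)) := by
    intro a b M p hab hM hcont hd hpos
    set δ := M ^ (-(1:ℝ)/((k:ℝ)+1)) with hδdef
    have hδ : 0 < δ := Real.rpow_pos_of_pos hM _
    have hMδ : 0 < M * δ := mul_pos hM hδ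
    obtain ⟨t0, ht0, hcen⟩ := exists_center hab (hd k (Nat.lt_succ_self k)) hpos
    have hp0cont : ContinuousOn (p 0) (Icc a b) :=
      fun x hx => (hd 0 (Nat.succ_pos k) x hx).continuousWithinAt
    have hgood : ∀ c d : ℝ, a ≤ c → c ≤ d → d ≤ b → (∀ x ∈ Icc c d, M * δ ≤ |p k x|) →
        ‖∫ x in c..d, Complex.exp (Complex.I * (p 0 x : ℂ))‖
          ≤ C * (M * δ) ^ (-(1:ℝ)/(k:ℝ)) := by
      intro c d hac hcd hdb hb'
      have hsub : Icc c d ⊆ Icc a b := Icc_subset_Icc hac hdb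
      refine hcore c d (M * δ) p hcd hMδ
        (fun x hx => ((hd k (Nat.lt_succ_self k) x (hsub hx)).mono hsub).continuousWithinAt)
        (fun j hj x hx => (hd j (hj.trans (Nat.lt_succ_self k)) x (hsub hx)).mono hsub)
        hb'
    have hkey := split hab hδ hM.le (by positivity) hp0cont ht0 hcen hgood
    have h1 : (M * δ) ^ (-(1:ℝ)/(k:ℝ)) = δ := rpow_helper hk hM
    have hcast : ((k+1:ℕ):ℝ) = (k:ℝ)+1 := by push_cast; ring
    calc ‖∫ x in a..b, Complex.exp (Complex.I * (p 0 x : ℂ))‖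
        ≤ 2 * (C * (M * δ) ^ (-(1:ℝ)/(k:ℝ))) + 2 * δ := hkey
      _ = (2*C+2) * δ := by rw [h1]; ring
      _ = (2*C+2) * M ^ (-(1:ℝ)/((k+1:ℕ):ℝ)) := by rw [hcast, hδdef]
  intro a b M p hab hM hcont hd hbig
  rcases sign_dichotomy hab hM hcont hbig with hs | hs
  · exact main a b M p hab hM hcont hd hs
  · have hres := main a b M (fun j x => -(p j x)) hab hM hcont.neg
      (fun j hj x hx => (hd j hj x hx).neg)
      (fun x hx => by have := hs x hx; linarith)
    have heq := norm_integral_exp_neg (p 0) a b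
    rw [heq] at hres
    exact hres

lemma core_exists : ∀ k : ℕ, 2 ≤ k → ∃ C : ℝ, 0 < C ∧ CoreBound k C := by
  intro k hk
  induction k, hk using Nat.le_induction with
  | base => exact ⟨10, by norm_num, core_base⟩
  | succ n hn ih =>
    obtain ⟨C, hC, hcore⟩ := ih
    exact ⟨2*C+2, by linarith, core_step (le_trans one_le_two hn) hC hcore⟩

end VdCAux

/-- Van der Corput lemma for k-th derivatives, k ≥ 2. -/
theorem van_der_corput_kth (k : ℕ) (hk : 2 ≤ k) :
    ∃ c : ℝ, 0 < c ∧
      ∀ (a b M : ℝ) (P : ℝ → ℝ) (ψ : ℝ → ℂ), a ≤ b → 0 < M →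
        ContDiffOn ℝ k P (Set.Icc a b) →
        (∀ x ∈ Set.Icc a b, M ≤ |iteratedDerivWithin k P (Set.Icc a b) x|) →
        ContDiffOn ℝ 1 ψ (Set.Icc a b) →
        ‖∫ x in a..b, Complex.exp (Complex.I * (P x : ℂ)) * ψ x‖ ≤
          c * M ^ (-(1 : ℝ) / k) *
            (‖ψ b‖ + ∫ x in a..b, ‖derivWithin ψ (Set.Icc a b) x‖) := by
  obtain ⟨C, hC, hcore⟩ := VdCAux.core_exists k hk
  refine ⟨C, hC, ?_⟩
  intro a b M P ψ hab hM hP hbig hψ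
  rcases eq_or_lt_of_le hab with rfl | hlt
  · rw [intervalIntegral.integral_same, intervalIntegral.integral_same, norm_zero]
    positivity
  have huniq : UniqueDiffOn ℝ (Set.Icc a b) := uniqueDiffOn_Icc hlt
  set p : ℕ → ℝ → ℝ := fun j => iteratedDerivWithin j P (Set.Icc a b) with hp
  have hchain : ∀ j, j < k → ∀ x ∈ Set.Icc a b,
      HasDerivWithinAt (p j) (p (j+1) x) (Set.Icc a b) x := by
    intro j hj x hx
    have hdiff := hP.differentiableOn_iteratedDerivWithin (m := j) (by exact_mod_cast hj) huniq
    have h1 := (hdiff x hx).hasDerivWithinAt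
    rwa [← iteratedDerivWithin_succ] at h1
  have hcontk : ContinuousOn (p k) (Set.Icc a b) :=
    hP.continuousOn_iteratedDerivWithin (by exact_mod_cast le_rfl) huniq
  set f : ℝ → ℂ := fun x => Complex.exp (Complex.I * (P x : ℂ)) with hf
  have hfcont : ContinuousOn f (Set.Icc a b) := VdCAux.contOn_exp hP.continuousOn
  set F : ℝ → ℂ := fun x => ∫ t in a..x, f t with hF
  have hFbound : ∀ x ∈ Set.Icc a b, ‖F x‖ ≤ C * M ^ (-(1:ℝ)/(k:ℝ)) := by
    intro x hx
    have hsub : Set.Icc a x ⊆ Set.Icc a b := Set.Icc_subset_Icc le_rfl hx.2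
    have hres := hcore a x M p hx.1 hM (hcontk.mono hsub)
      (fun j hj y hy => (hchain j hj y (hsub hy)).mono hsub)
      (fun y hy => hbig y (hsub hy))
    have hFx : F x = ∫ t in a..x, Complex.exp (Complex.I * (p 0 t : ℂ)) := by
      rw [hF]
      simp only [hf, hp, iteratedDerivWithin_zero]
    rw [hFx]
    exact hres
  have hψd : ∀ x ∈ Set.Icc a b,
      HasDerivWithinAt ψ (derivWithin ψ (Set.Icc a b) x) (Set.Icc a b) x :=
    fun x hx => ((hψ.differentiableOn one_ne_zero) x hx).hasDerivWithinAt
  have hψ'cont : ContinuousOn (fun x => derivWithin ψ (Set.Icc a b) x) (Set.Icc a b) :=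
    hψ.continuousOn_derivWithin huniq le_rfl
  have hψcont : ContinuousOn ψ (Set.Icc a b) := hψ.continuousOn
  have hFcont : ContinuousOn F (Set.Icc a b) := by
    have h1 : IntegrableOn f (Set.uIcc a b) volume := by
      rw [Set.uIcc_of_le hab]
      exact hfcont.integrableOn_Icc
    have := intervalIntegral.continuousOn_primitive_interval h1
    rwa [Set.uIcc_of_le hab] at this
  have hFd : ∀ x ∈ Set.Ioo a b, HasDerivAt F (f x) x := by
    intro x hx
    apply intervalIntegral.integral_hasDerivAt_right
    · apply ContinuousOn.intervalIntegrable
      rw [Set.uIcc_of_le hx.1.le]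
      exact hfcont.mono (Set.Icc_subset_Icc le_rfl hx.2.le)
    · exact (hfcont.mono Set.Ioo_subset_Icc_self).stronglyMeasurableAtFilter isOpen_Ioo x hx
    · exact (hfcont x ⟨hx.1.le, hx.2.le⟩).continuousAt (Icc_mem_nhds hx.1 hx.2)
  have hi1 : IntervalIntegrable (fun x => f x * ψ x) volume a b := by
    apply ContinuousOn.intervalIntegrable
    rw [Set.uIcc_of_le hab]
    exact hfcont.mul hψcont
  have hi2 : IntervalIntegrable (fun x => F x * derivWithin ψ (Set.Icc a b) x) volume a b := by
    apply ContinuousOn.intervalIntegrable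
    rw [Set.uIcc_of_le hab]
    exact hFcont.mul hψ'cont
  have hftc := VdCAux.ftc hab (hFcont.mul hψcont)
    (fun x hx => ((hFd x hx).hasDerivWithinAt).mul (hψd x (Set.Ioo_subset_Icc_self hx)))
    (hi1.add hi2)
  rw [intervalIntegral.integral_add hi1 hi2] at hftc
  have hFa : F a = 0 := intervalIntegral.integral_same
  rw [Pi.mul_apply, Pi.mul_apply, hFa, zero_mul, sub_zero] at hftc
  have hsplit : (∫ x in a..b, f x * ψ x)
      = F b * ψ b - ∫ x in a..b, F x * derivWithin ψ (Set.Icc a b) x :=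
    eq_sub_of_add_eq hftc
  set K := C * M ^ (-(1:ℝ)/(k:ℝ)) with hK
  have hKpos : 0 < K := by positivity
  have h2 : ‖∫ x in a..b, F x * derivWithin ψ (Set.Icc a b) x‖
      ≤ K * ∫ x in a..b, ‖derivWithin ψ (Set.Icc a b) x‖ := by
    calc ‖∫ x in a..b, F x * derivWithin ψ (Set.Icc a b) x‖
        ≤ ∫ x in a..b, ‖F x * derivWithin ψ (Set.Icc a b) x‖ :=
          intervalIntegral.norm_integral_le_integral_norm hab
      _ ≤ ∫ x in a..b, K * ‖derivWithin ψ (Set.Icc a b) x‖ := by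
          apply intervalIntegral.integral_mono_on hab
          · apply ContinuousOn.intervalIntegrable
            rw [Set.uIcc_of_le hab]
            exact (hFcont.mul hψ'cont).norm
          · apply ContinuousOn.intervalIntegrable
            rw [Set.uIcc_of_le hab]
            exact continuousOn_const.mul hψ'cont.norm
          · intro x hx
            rw [norm_mul]
            exact mul_le_mul_of_nonneg_right (hFbound x hx) (norm_nonneg _)
      _ = K * ∫ x in a..b, ‖derivWithin ψ (Set.Icc a b) x‖ := by
          rw [← intervalIntegral.integral_const_mul]
  calc ‖∫ x in a..b, f x * ψ x‖
      = ‖F b * ψ b - ∫ x in a..b, F x * derivWithin ψ (Set.Icc a b) x‖ := by rw [hsplit]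
    _ ≤ ‖F b * ψ b‖ + ‖∫ x in a..b, F x * derivWithin ψ (Set.Icc a b) x‖ := norm_sub_le _ _
    _ ≤ K * ‖ψ b‖ + K * ∫ x in a..b, ‖derivWithin ψ (Set.Icc a b) x‖ := by
        gcongr
        rw [norm_mul]
        exact mul_le_mul_of_nonneg_right (hFbound b ⟨hab, le_rfl⟩) (norm_nonneg _)
    _ = K * (‖ψ b‖ + ∫ x in a..b, ‖derivWithin ψ (Set.Icc a b) x‖) := by ring
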